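/- Let G be a finitely generated group whose center contains an element of infinite order, and let (H_i) be a descending chain of finite-index normal subgroups of G with trivial intersection. Then the rank gradient RG(G, (H_i)) = lim (d(H_i)-1)/[G:H_i] equals 0. -/

import Mathlib

open Filter

/-- `ngen G` is `d(G)`, the minimal number of generators of the group `G`. -/
noncomputable def ngen (G : Type*) [Group G] : ℕ :=
  sInf {n | ∃ S : Finset G, S.card = n ∧ Subgroup.closure (S : Set G) = ⊤}

lemma ngen_eq_rank (G : Type*) [Group G] [Group.FG G] : ngen G = Group.rank G := by
  unfold ngen
  apply le_antisymm
  · obtain ⟨S, h1, h2⟩ := Group.rank_spec G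
    exact Nat.sInf_le ⟨S, h1, h2⟩
  · have hne : {n | ∃ S : Finset G, S.card = n ∧ Subgroup.closure (S : Set G) = ⊤}.Nonempty := by
      obtain ⟨S, h1, h2⟩ := Group.rank_spec G
      exact ⟨S.card, S, rfl, h2⟩
    obtain ⟨S, h1, h2⟩ := Nat.sInf_mem hne
    rw [← h1]
    exact Group.rank_le h2

lemma one_le_rank {K : Type*} [Group K] [Group.FG K] [Nontrivial K] : 1 ≤ Group.rank K := by
  by_contra h
  push_neg at h
  rw [Nat.lt_one_iff] at h
  obtain ⟨S, hc, hg⟩ := Group.rank_spec K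
  rw [h, Finset.card_eq_zero] at hc
  subst hc
  rw [Finset.coe_empty, Subgroup.closure_empty] at hg
  obtain ⟨x, y, hxy⟩ := exists_pair_ne K
  have hx : x ∈ (⊥ : Subgroup K) := hg ▸ Subgroup.mem_top x
  have hy : y ∈ (⊥ : Subgroup K) := hg ▸ Subgroup.mem_top y
  rw [Subgroup.mem_bot] at hx hy
  exact hxy (hx.trans hy.symm)

/-- Rank of a group is at most rank of a normal subgroup plus rank of the quotient. -/
lemma rank_le_extension {K : Type*} [Group K] (N : Subgroup K) [N.Normal] [Group.FG ↥N]
    [Group.FG K] : Group.rank K ≤ Group.rank ↥N + Group.rank (K ⧸ N) := by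
  classical
  obtain ⟨S, hScard, hSgen⟩ := Group.rank_spec ↥N
  obtain ⟨T, hTcard, hTgen⟩ := Group.rank_spec (K ⧸ N)
  let f : K ⧸ N → K := fun q => Classical.choose (QuotientGroup.mk'_surjective N q)
  have hf : ∀ q, (QuotientGroup.mk' N) (f q) = q := fun q =>
    Classical.choose_spec (QuotientGroup.mk'_surjective N q)
  let U : Finset K := S.image N.subtype ∪ T.image f
  have hNle : N ≤ Subgroup.closure (U : Set K) := by
    have hN : N = Subgroup.closure (N.subtype '' (S : Set ↥N)) := by
      rw [← MonoidHom.map_closure, hSgen, ← MonoidHom.range_eq_map, Subgroup.range_subtype]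
    rw [hN]
    apply Subgroup.closure_mono
    intro x hx
    simp only [U, Finset.coe_union, Finset.coe_image]
    exact Set.mem_union_left _ hx
  have htop : ∀ k : K, k ∈ Subgroup.closure (U : Set K) := by
    intro k
    have hT : (T : Set (K ⧸ N)) ⊆ (QuotientGroup.mk' N) '' (U : Set K) := by
      intro q hq
      refine ⟨f q, ?_, hf q⟩
      simp only [U, Finset.coe_union, Finset.coe_image]
      exact Set.mem_union_right _ ⟨q, hq, rfl⟩
    have hmap : (⊤ : Subgroup (K ⧸ N)) ≤
        Subgroup.map (QuotientGroup.mk' N) (Subgroup.closure (U : Set K)) := by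
      rw [← hTgen, MonoidHom.map_closure]
      exact Subgroup.closure_mono hT
    obtain ⟨u, hu, he⟩ := hmap (Subgroup.mem_top ((QuotientGroup.mk' N) k))
    have hker : u⁻¹ * k ∈ N := by
      rw [← QuotientGroup.ker_mk' N, MonoidHom.mem_ker, map_mul, map_inv, he, inv_mul_cancel]
    have : k = u * (u⁻¹ * k) := by group
    rw [this]
    exact mul_mem hu (hNle hker)
  have hUgen : Subgroup.closure (U : Set K) = ⊤ := by
    ext x; simp [htop x]
  calc Group.rank K ≤ U.card := Group.rank_le hUgen
    _ ≤ (S.image N.subtype).card + (T.image f).card := Finset.card_union_le _ _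
    _ ≤ S.card + T.card := Nat.add_le_add (Finset.card_image_le) (Finset.card_image_le)
    _ = Group.rank ↥N + Group.rank (K ⧸ N) := by rw [hScard, hTcard]

/-- If a finitely generated group `G` has a central element of infinite order, then the
rank gradient of `G` with respect to any descending chain of finite-index normal
subgroups with trivial intersection is `0`. -/
theorem rank_gradient_zero_of_infinite_center {G : Type*} [Group G] [Group.FG G]
    (z : G) (hz : z ∈ Subgroup.center G) (hord : ¬ IsOfFinOrder z)
    (H : ℕ → Subgroup G) (hchain : ∀ i, H (i + 1) ≤ H i) (hnorm : ∀ i, (H i).Normal)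
    (hfin : ∀ i, (H i).index ≠ 0) (hint : (⨅ i, H i) = ⊥) :
    Tendsto (fun i => ((ngen ↥(H i) : ℝ) - 1) / ((H i).index : ℝ)) atTop (nhds 0) := by
  classical
  set Cz := Subgroup.zpowers z with hCzdef
  have hCzle : Cz ≤ Subgroup.center G := Subgroup.zpowers_le.mpr hz
  haveI hCznormal : Cz.Normal := by
    constructor
    intro n hn g
    have hcomm := Subgroup.mem_center_iff.mp (hCzle hn) g
    have : g * n * g⁻¹ = n := by rw [hcomm, mul_assoc, mul_inv_cancel, mul_one]
    rwa [this]
  have hzpow : ∀ n : ℕ, n ≠ 0 → z ^ n ≠ 1 := by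
    intro n hn h1
    exact hord (isOfFinOrder_iff_pow_eq_one.mpr ⟨n, by omega, h1⟩)
  have hanti : Antitone H := antitone_nat_of_succ_le hchain
  -- basic per-index facts
  have hrne : ∀ j, (H j).relIndex Cz ≠ 0 := by
    intro j
    haveI := hnorm j
    exact fun h0 => hfin j (Nat.eq_zero_of_zero_dvd (h0 ▸ Subgroup.relIndex_dvd_index_of_normal (H j) Cz))
  have hzr : ∀ j, z ^ ((H j).relIndex Cz) ∈ H j := by
    intro j
    haveI : ((H j).subgroupOf Cz).Normal := by
      constructor
      intro n hn g
      rw [Subgroup.mem_subgroupOf] at hn ⊢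
      have hcomm := Subgroup.mem_center_iff.mp (hCzle n.2) (g : G)
      have : ((g * n * g⁻¹ : ↥Cz) : G) = (n : G) := by
        push_cast
        rw [hcomm, mul_assoc, mul_inv_cancel, mul_one]
      rwa [this]
    have := Subgroup.pow_index_mem ((H j).subgroupOf Cz) ⟨z, Subgroup.mem_zpowers z⟩
    rw [Subgroup.mem_subgroupOf] at this
    simpa [Subgroup.relIndex] using this
  -- the relative index tends to infinity
  have hr_tendsto : Tendsto (fun j => (H j).relIndex Cz) atTop atTop := by
    rw [tendsto_atTop]
    intro b
    have h1 : ∀ k : ℕ, ∀ᶠ j in atTop, z ^ (k + 1) ∉ H j := by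
      intro k
      have hne : z ^ (k + 1) ∉ (⨅ i, H i) := by
        rw [hint, Subgroup.mem_bot]
        exact hzpow (k + 1) (by omega)
      rw [Subgroup.mem_iInf] at hne
      push_neg at hne
      obtain ⟨i, hi⟩ := hne
      exact eventually_atTop.mpr ⟨i, fun j hj hmem => hi (hanti hj hmem)⟩
    have h2 : ∀ᶠ j in atTop, ∀ k ∈ Finset.range b, z ^ (k + 1) ∉ H j :=
      (Finset.eventually_all (Finset.range b)).mpr fun k _ => h1 k
    filter_upwards [h2] with j hj
    by_contra hlt
    push_neg at hlt
    have hpos : 1 ≤ (H j).relIndex Cz := Nat.one_le_iff_ne_zero.mpr (hrne j)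
    have hk : (H j).relIndex Cz - 1 ∈ Finset.range b := Finset.mem_range.mpr (by omega)
    have h3 := hj _ hk
    have h4 : (H j).relIndex Cz - 1 + 1 = (H j).relIndex Cz := by omega
    rw [h4] at h3
    exact h3 (hzr j)
  -- the main rank estimate
  set c : ℝ := (Group.rank G : ℝ) with hc
  have key : ∀ j, 0 ≤ ((ngen ↥(H j) : ℝ) - 1) / ((H j).index : ℝ) ∧
      ((ngen ↥(H j) : ℝ) - 1) / ((H j).index : ℝ) ≤ c / ((H j).relIndex Cz : ℝ) := by
    intro j
    haveI := hnorm j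
    haveI : (H j).FiniteIndex := ⟨hfin j⟩
    haveI : Group.FG ↥(H j) := Subgroup.fg_of_index_ne_zero (H j)
    haveI : (H j ⊔ Cz).FiniteIndex :=
      ⟨fun h0 => hfin j (Nat.eq_zero_of_zero_dvd (h0 ▸ Subgroup.index_dvd_of_le le_sup_left))⟩
    haveI : Group.FG ↥(H j ⊔ Cz) := Subgroup.fg_of_index_ne_zero (H j ⊔ Cz)
    haveI : Nontrivial ↥(H j) := by
      refine ⟨⟨z ^ (H j).index, Subgroup.pow_index_mem (H j) z⟩, 1, fun h => ?_⟩
      exact hzpow _ (hfin j) (congrArg Subtype.val h)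
    -- the central cyclic subgroup of H j
    set M : Subgroup ↥(H j) := Cz.subgroupOf (H j) with hM
    haveI : M.Normal := by
      constructor
      intro n hn g
      rw [Subgroup.mem_subgroupOf] at hn ⊢
      have hcomm := Subgroup.mem_center_iff.mp (hCzle hn) (g : G)
      have : ((g * n * g⁻¹ : ↥(H j)) : G) = (n : G) := by
        push_cast
        rw [hcomm, mul_assoc, mul_inv_cancel, mul_one]
      rwa [this]
    -- M is cyclic
    haveI hCzcyc : IsCyclic ↥Cz := by
      refine ⟨⟨⟨z, Subgroup.mem_zpowers z⟩, fun x => ?_⟩⟩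
      obtain ⟨a, ha⟩ := x.2
      exact ⟨a, Subtype.ext (by simpa using ha)⟩
    have e1 : ↥((H j ⊓ Cz).subgroupOf Cz) ≃* ↥(H j ⊓ Cz) :=
      Subgroup.subgroupOfEquivOfLe inf_le_right
    have e2 : ↥((H j ⊓ Cz).subgroupOf (H j)) ≃* ↥(H j ⊓ Cz) :=
      Subgroup.subgroupOfEquivOfLe inf_le_left
    have hMeq : (H j ⊓ Cz).subgroupOf (H j) = M := by
      rw [hM, Subgroup.inf_subgroupOf_left]
    have hMeq2 : (H j ⊓ Cz).subgroupOf Cz = (H j).subgroupOf Cz :=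
      Subgroup.inf_subgroupOf_right (H j) Cz
    haveI : IsCyclic ↥((H j).subgroupOf Cz) := Subgroup.isCyclic _
    haveI hMcyc : IsCyclic ↥M := by
      have e : ↥((H j).subgroupOf Cz) ≃* ↥M := by
        rw [← hMeq2]
        exact e1.trans (e2.symm.trans (MulEquiv.subgroupCongr hMeq))
      exact isCyclic_of_surjective e e.surjective
    obtain ⟨g, hg⟩ := IsCyclic.exists_generator (α := ↥M)
    have hgen : Subgroup.closure (({g} : Finset ↥M) : Set ↥M) = ⊤ := by
      rw [Finset.coe_singleton, ← Subgroup.zpowers_eq_closure]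
      exact (Subgroup.eq_top_iff' _).mpr hg
    haveI : Group.FG ↥M := ⟨⟨{g}, hgen⟩⟩
    have hrankM : Group.rank ↥M ≤ 1 := by
      simpa using Group.rank_le hgen
    -- rank of the quotient via the second isomorphism theorem and Schreier
    have e3 : ↥(H j) ⧸ M ≃* ↥(H j ⊔ Cz) ⧸ Cz.subgroupOf (H j ⊔ Cz) :=
      QuotientGroup.quotientInfEquivProdNormalQuotient (H j) Cz
    have hrankQ : Group.rank (↥(H j) ⧸ M) ≤ (H j ⊔ Cz).index * Group.rank G := by
      calc Group.rank (↥(H j) ⧸ M)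
          = Group.rank (↥(H j ⊔ Cz) ⧸ Cz.subgroupOf (H j ⊔ Cz)) := Group.rank_congr e3
        _ ≤ Group.rank ↥(H j ⊔ Cz) :=
            Group.rank_le_of_surjective (QuotientGroup.mk' _) (QuotientGroup.mk'_surjective _)
        _ ≤ (H j ⊔ Cz).index * Group.rank G := Subgroup.rank_le_index_mul_rank _
    have hrank : Group.rank ↥(H j) ≤ 1 + (H j ⊔ Cz).index * Group.rank G :=
      (rank_le_extension M).trans (Nat.add_le_add hrankM hrankQ)
    -- index factorization
    have hidx : (H j).relIndex Cz * (H j ⊔ Cz).index = (H j).index := by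
      rw [← Subgroup.relIndex_sup_left (K := H j) (H := Cz)]
      exact Subgroup.relIndex_mul_index le_sup_left
    -- numeric conclusion
    rw [ngen_eq_rank]
    have hrpos : (0 : ℝ) < ((H j).relIndex Cz : ℝ) := by
      exact_mod_cast Nat.pos_of_ne_zero (hrne j)
    have htpos : (0 : ℝ) < ((H j ⊔ Cz).index : ℝ) := by
      exact_mod_cast Nat.pos_of_ne_zero Subgroup.FiniteIndex.index_ne_zero
    have hipos : (0 : ℝ) < ((H j).index : ℝ) := by
      exact_mod_cast Nat.pos_of_ne_zero (hfin j)
    constructor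
    · apply div_nonneg _ hipos.le
      have : (1 : ℝ) ≤ (Group.rank ↥(H j) : ℝ) := by exact_mod_cast one_le_rank
      linarith
    · rw [div_le_div_iff₀ hipos hrpos]
      have hrank' : (Group.rank ↥(H j) : ℝ) ≤ 1 + ((H j ⊔ Cz).index : ℝ) * c := by
        rw [hc]; exact_mod_cast hrank
      have hidx' : ((H j).relIndex Cz : ℝ) * ((H j ⊔ Cz).index : ℝ) = ((H j).index : ℝ) := by
        exact_mod_cast hidx
      have hcnn : (0 : ℝ) ≤ c := by positivity
      nlinarith [mul_le_mul_of_nonneg_right (by linarith : (Group.rank ↥(H j) : ℝ) - 1 ≤ ((H j ⊔ Cz).index : ℝ) * c) hrpos.le]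
  -- squeeze
  have hupper : Tendsto (fun j => c / ((H j).relIndex Cz : ℝ)) atTop (nhds 0) :=
    Tendsto.div_atTop tendsto_const_nhds (tendsto_natCast_atTop_atTop.comp hr_tendsto)
  exact tendsto_of_tendsto_of_tendsto_of_le_of_le tendsto_const_nhds hupper
    (fun j => (key j).1) (fun j => (key j).2)
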